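/- Let x < y in the Bruhat order on S_n and let s be a simple reflection with sy < y and sx < x. Assume x is not comparable to sy in the Bruhat order. Then every z ∈ S_n with x < z < y satisfies sz < z. -/

import Mathlib

open Equiv

/-- The simple transposition σ_i = (i, i+1) in S_n (0-indexed). -/
def simpleT (n i : ℕ) (h : i + 1 < n) : Perm (Fin n) :=
  Equiv.swap ⟨i, Nat.lt_of_succ_lt h⟩ ⟨i + 1, h⟩

/-- Coxeter length = number of inversions. -/
def len {n : ℕ} (w : Perm (Fin n)) : ℕ :=
  (Finset.univ.filter fun p : Fin n × Fin n => p.1 < p.2 ∧ w p.2 < w p.1).card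

/-- Parabolic subgroup generated by the simple reflections with indices in J. -/
def SJ (n : ℕ) (J : Set ℕ) : Subgroup (Perm (Fin n)) :=
  Subgroup.closure {s | ∃ i, ∃ h : i + 1 < n, i ∈ J ∧ s = simpleT n i h}

/-- Minimal length left coset representatives: ℓ(ws) > ℓ(w) for all s ∈ J. -/
def DJ (n : ℕ) (J : Set ℕ) : Set (Perm (Fin n)) :=
  {w | ∀ i, ∀ h : i + 1 < n, i ∈ J → len w < len (w * simpleT n i h)}

/-- Minimal double coset representatives: ℓ(s₁v) > ℓ(v), ℓ(vs₂) > ℓ(v). -/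
def D2 (n : ℕ) (J1 J2 : Set ℕ) : Set (Perm (Fin n)) :=
  {v | (∀ i, ∀ h : i + 1 < n, i ∈ J1 → len v < len (simpleT n i h * v)) ∧
       (∀ i, ∀ h : i + 1 < n, i ∈ J2 → len v < len (v * simpleT n i h))}

/-- Bruhat order: reflexive transitive closure of multiplying by a transposition
while increasing the length. -/
def BruhatLE {n : ℕ} (x y : Perm (Fin n)) : Prop :=
  Relation.ReflTransGen
    (fun u v => (∃ a b : Fin n, a ≠ b ∧ v = Equiv.swap a b * u) ∧ len u < len v) x y

def BruhatLT {n : ℕ} (x y : Perm (Fin n)) : Prop := BruhatLE x y ∧ x ≠ y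

theorem Equiv.Perm.apply_inv_self {α : Type*} (f : Perm α) (x : α) : f (f⁻¹ x) = x :=
  f.apply_symm_apply x

theorem Equiv.Perm.inv_apply_self {α : Type*} (f : Perm α) (x : α) : f⁻¹ (f x) = x :=
  f.symm_apply_apply x

namespace BAux
variable {n : ℕ}

/-- number of positions a < r with value ≥ j -/
def MM (w : Perm (Fin n)) (r j : ℕ) : ℕ :=
  (Finset.univ.filter fun a : Fin n => (a : ℕ) < r ∧ j ≤ ((w a : Fin n) : ℕ)).card

lemma pull (P : Fin n → Prop) [DecidablePred P] (e : Fin n) :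
    (Finset.univ.filter P).card
      = (Finset.univ.filter fun a => a ≠ e ∧ P a).card + (if P e then 1 else 0) := by
  classical
  have h := Finset.card_filter_add_card_filter_not (s := Finset.univ.filter P)
    (p := fun a : Fin n => a = e)
  rw [Finset.filter_filter, Finset.filter_filter] at h
  have h1 : (Finset.univ.filter fun a : Fin n => P a ∧ a = e)
      = if P e then {e} else ∅ := by
    split_ifs with hPe
    · ext a; simp only [Finset.mem_filter, Finset.mem_univ, true_and, Finset.mem_singleton]
      constructor
      · rintro ⟨_, rfl⟩; rfl
      · rintro rfl; exact ⟨hPe, rfl⟩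
    · ext a; simp only [Finset.mem_filter, Finset.mem_univ, true_and, Finset.notMem_empty,
        iff_false, not_and]
      rintro hPa rfl; exact hPe hPa
  have h2 : (Finset.univ.filter fun a : Fin n => P a ∧ ¬a = e)
      = (Finset.univ.filter fun a : Fin n => a ≠ e ∧ P a) := by
    apply Finset.filter_congr; intro a _; tauto
  rw [h1, h2] at h
  rw [← h]
  split_ifs <;> simp [add_comm]

lemma pull2 (P : Fin n → Prop) [DecidablePred P] (p q : Fin n) (hpq : p ≠ q) :
    (Finset.univ.filter P).card
      = (Finset.univ.filter fun a => a ≠ p ∧ a ≠ q ∧ P a).card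
        + (if P p then 1 else 0) + (if P q then 1 else 0) := by
  classical
  rw [pull P p, pull (fun a => a ≠ p ∧ P a) q]
  have : (Finset.univ.filter fun a => a ≠ q ∧ a ≠ p ∧ P a)
      = (Finset.univ.filter fun a => a ≠ p ∧ a ≠ q ∧ P a) := by
    apply Finset.filter_congr; intro a _; tauto
  rw [this]
  have hq : ((q : Fin n) ≠ p ∧ P q) ↔ P q := by
    constructor
    · exact fun h => h.2
    · exact fun h => ⟨fun hh => hpq hh.symm, h⟩
  rw [if_congr hq rfl rfl]; ring


/-- the pairing used to compare inversion sets -/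
def gmap (p q : Fin n) : Fin n × Fin n → Fin n × Fin n :=
  fun x => if x.1 = q then (p, x.2)
    else if x.2 = p then (x.1, q)
    else if x.1 = p ∧ q < x.2 then (q, x.2)
    else if x.2 = q ∧ x.1 < p then (x.1, p)
    else x

lemma gmap_fix {p q : Fin n} (hpq : p < q) : gmap p q (p, q) = (p, q) := by
  simp [gmap, hpq.ne, hpq.ne', lt_irrefl]

lemma gmap_invol {p q : Fin n} (hpq : p < q) {x : Fin n × Fin n} (hx : x.1 < x.2) :
    gmap p q (gmap p q x) = x := by
  obtain ⟨c, d⟩ := x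
  simp only at hx
  by_cases h1 : c = q
  · have hqd : q < d := h1 ▸ hx
    have e1 : gmap p q (c, d) = (p, d) := by simp [gmap, h1]
    have e2 : gmap p q (p, d) = (q, d) := by
      simp [gmap, hpq.ne, (show d ≠ p from (hpq.trans hqd).ne'), hqd]
    rw [e1, e2, h1]
  · by_cases h2 : d = p
    · have hcp : c < p := h2 ▸ hx
      have e1 : gmap p q (c, d) = (c, q) := by simp [gmap, h1, h2]
      have e2 : gmap p q (c, q) = (c, p) := by
        simp [gmap, (show c ≠ q from (hcp.trans hpq).ne), hpq.ne', hcp, lt_irrefl,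
          (show c ≠ p from hcp.ne)]
      rw [e1, e2, h2]
    · by_cases h3 : c = p ∧ q < d
      · have e1 : gmap p q (c, d) = (q, d) := by simp [gmap, h1, h2, h3]
        have e2 : gmap p q (q, d) = (p, d) := by simp [gmap]
        rw [e1, e2, h3.1]
      · by_cases h4 : d = q ∧ c < p
        · have e1 : gmap p q (c, d) = (c, p) := by simp [gmap, h1, h2, h3, h4]
          have e2 : gmap p q (c, p) = (c, q) := by
            simp [gmap, (show c ≠ q from (h4.2.trans hpq).ne)]
          rw [e1, e2, h4.1]
        · have e1 : gmap p q (c, d) = (c, d) := by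
            simp only [gmap]; rw [if_neg h1, if_neg h2, if_neg h3, if_neg h4]
          rw [e1, e1]

lemma gmap_mem {u : Perm (Fin n)} {p q : Fin n} (hpq : p < q) (hv : u p < u q)
    {x : Fin n × Fin n} (hx1 : x.1 < x.2) (hx2 : u x.2 < u x.1) :
    (gmap p q x).1 < (gmap p q x).2 ∧
      (u * Equiv.swap p q) ((gmap p q x).2) < (u * Equiv.swap p q) ((gmap p q x).1) := by
  obtain ⟨c, d⟩ := x
  simp only at hx1 hx2
  have vp : (u * Equiv.swap p q) p = u q := by
    simp [Equiv.Perm.mul_apply, Equiv.swap_apply_left]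
  have vq : (u * Equiv.swap p q) q = u p := by
    simp [Equiv.Perm.mul_apply, Equiv.swap_apply_right]
  have voff : ∀ e : Fin n, e ≠ p → e ≠ q → (u * Equiv.swap p q) e = u e := by
    intro e he1 he2
    simp [Equiv.Perm.mul_apply, Equiv.swap_apply_of_ne_of_ne he1 he2]
  by_cases h1 : c = q
  · have hqd : q < d := h1 ▸ hx1
    have e1 : gmap p q (c, d) = (p, d) := by simp [gmap, h1]
    rw [e1]
    refine ⟨hpq.trans hqd, ?_⟩
    show (u * Equiv.swap p q) d < (u * Equiv.swap p q) p
    rw [vp, voff d (ne_of_gt (hpq.trans hqd)) (ne_of_gt hqd)]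
    exact h1 ▸ hx2
  · by_cases h2 : d = p
    · have hcp : c < p := h2 ▸ hx1
      have e1 : gmap p q (c, d) = (c, q) := by simp [gmap, h1, h2]
      rw [e1]
      refine ⟨hcp.trans hpq, ?_⟩
      show (u * Equiv.swap p q) q < (u * Equiv.swap p q) c
      rw [vq, voff c (ne_of_lt hcp) (ne_of_lt (hcp.trans hpq))]
      exact h2 ▸ hx2
    · by_cases h3 : c = p ∧ q < d
      · have e1 : gmap p q (c, d) = (q, d) := by simp [gmap, h1, h2, h3]
        rw [e1]
        refine ⟨h3.2, ?_⟩
        show (u * Equiv.swap p q) d < (u * Equiv.swap p q) q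
        rw [vq, voff d (ne_of_gt (hpq.trans h3.2)) (ne_of_gt h3.2)]
        exact h3.1 ▸ hx2
      · by_cases h4 : d = q ∧ c < p
        · have e1 : gmap p q (c, d) = (c, p) := by simp [gmap, h1, h2, h3, h4]
          rw [e1]
          refine ⟨h4.2, ?_⟩
          show (u * Equiv.swap p q) p < (u * Equiv.swap p q) c
          rw [vp, voff c (ne_of_lt h4.2) (ne_of_lt (h4.2.trans hpq))]
          exact h4.1 ▸ hx2
        · have e1 : gmap p q (c, d) = (c, d) := by
            simp only [gmap]; rw [if_neg h1, if_neg h2, if_neg h3, if_neg h4]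
          rw [e1]
          refine ⟨hx1, ?_⟩
          show (u * Equiv.swap p q) d < (u * Equiv.swap p q) c
          by_cases hc : c = p
          · have hdq : d < q := by
              rcases lt_trichotomy d q with h | h | h
              · exact h
              · exact absurd (hc ▸ h ▸ hx2) (lt_asymm hv)
              · exact absurd ⟨hc, h⟩ h3
            have ec : (u * Equiv.swap p q) c = u q := by rw [hc]; exact vp
            rw [ec, voff d h2 (ne_of_lt hdq)]
            exact lt_trans (hc ▸ hx2) hv
          · by_cases hd : d = q
            · have ed : (u * Equiv.swap p q) d = u p := by rw [hd]; exact vq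
              rw [ed, voff c hc h1]
              exact lt_trans hv (hd ▸ hx2)
            · rw [voff c hc h1, voff d h2 hd]
              exact hx2

lemma len_lt_of_swap {u : Perm (Fin n)} {p q : Fin n} (hpq : p < q) (hv : u p < u q) :
    len u < len (u * Equiv.swap p q) := by
  classical
  set v := u * Equiv.swap p q with hvdef
  have hmem : ∀ x ∈ (Finset.univ.filter fun x : Fin n × Fin n => x.1 < x.2 ∧ u x.2 < u x.1),
      gmap p q x ∈ ((Finset.univ.filter fun x : Fin n × Fin n =>
        x.1 < x.2 ∧ v x.2 < v x.1).erase (p, q)) := by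
    intro x hx
    rw [Finset.mem_filter] at hx
    obtain ⟨-, hx1, hx2⟩ := hx
    have h := gmap_mem hpq hv hx1 hx2
    rw [Finset.mem_erase, Finset.mem_filter]
    refine ⟨?_, Finset.mem_univ _, h.1, h.2⟩
    intro hcon
    have : x = (p, q) := by
      rw [← gmap_invol hpq hx1, hcon, gmap_fix hpq]
    rw [this] at hx2
    exact lt_asymm hv hx2
  have hinj : Set.InjOn (gmap p q)
      ((Finset.univ.filter fun x : Fin n × Fin n => x.1 < x.2 ∧ u x.2 < u x.1) : Finset _) := by
    intro a ha b hb hab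
    rw [Finset.mem_coe, Finset.mem_filter] at ha hb
    rw [← gmap_invol hpq ha.2.1, hab, gmap_invol hpq hb.2.1]
  have h1 : len u ≤ ((Finset.univ.filter fun x : Fin n × Fin n =>
      x.1 < x.2 ∧ v x.2 < v x.1).erase (p, q)).card :=
    Finset.card_le_card_of_injOn (gmap p q) hmem hinj
  have h2 : ((Finset.univ.filter fun x : Fin n × Fin n =>
      x.1 < x.2 ∧ v x.2 < v x.1).erase (p, q)).card < len v := by
    apply Finset.card_erase_lt_of_mem
    rw [Finset.mem_filter]
    refine ⟨Finset.mem_univ _, hpq, ?_⟩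
    show v q < v p
    have vp : v p = u q := by simp [hvdef, Equiv.Perm.mul_apply, Equiv.swap_apply_left]
    have vq : v q = u p := by simp [hvdef, Equiv.Perm.mul_apply, Equiv.swap_apply_right]
    rw [vp, vq]; exact hv
  exact lt_of_le_of_lt h1 h2


lemma MM_pull2 (u : Perm (Fin n)) (p q : Fin n) (hpq : p ≠ q) (r j : ℕ) :
    MM u r j
      = (Finset.univ.filter fun a : Fin n =>
          a ≠ p ∧ a ≠ q ∧ (a : ℕ) < r ∧ j ≤ ((u a : Fin n) : ℕ)).card
        + (if (p : ℕ) < r ∧ j ≤ ((u p : Fin n) : ℕ) then 1 else 0)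
        + (if (q : ℕ) < r ∧ j ≤ ((u q : Fin n) : ℕ) then 1 else 0) := by
  classical
  exact pull2 (fun a : Fin n => (a : ℕ) < r ∧ j ≤ ((u a : Fin n) : ℕ)) p q hpq

lemma MM_mul_swap (u : Perm (Fin n)) (p q : Fin n) (hpq : p ≠ q) (r j : ℕ) :
    MM (u * Equiv.swap p q) r j
      = (Finset.univ.filter fun a : Fin n =>
          a ≠ p ∧ a ≠ q ∧ (a : ℕ) < r ∧ j ≤ ((u a : Fin n) : ℕ)).card
        + (if (q : ℕ) < r ∧ j ≤ ((u p : Fin n) : ℕ) then 1 else 0)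
        + (if (p : ℕ) < r ∧ j ≤ ((u q : Fin n) : ℕ) then 1 else 0) := by
  classical
  have step1 : MM (u * Equiv.swap p q) r j
      = (Finset.univ.filter fun b : Fin n =>
          ((Equiv.swap p q b : Fin n) : ℕ) < r ∧ j ≤ ((u b : Fin n) : ℕ)).card := by
    unfold MM
    apply Finset.card_equiv (Equiv.swap p q)
    intro a
    rw [Finset.mem_filter, Finset.mem_filter]
    simp only [Finset.mem_filter, Finset.mem_univ, true_and, Equiv.Perm.mul_apply,
      Equiv.swap_apply_self]
  rw [step1, pull2 (fun b : Fin n =>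
      ((Equiv.swap p q b : Fin n) : ℕ) < r ∧ j ≤ ((u b : Fin n) : ℕ)) p q hpq]
  simp only [Equiv.swap_apply_left, Equiv.swap_apply_right]
  congr 2
  apply congrArg Finset.card
  apply Finset.filter_congr
  intro a _
  constructor
  · rintro ⟨h1, h2, h3, h4⟩
    exact ⟨h1, h2, by rwa [Equiv.swap_apply_of_ne_of_ne h1 h2] at h3, h4⟩
  · rintro ⟨h1, h2, h3, h4⟩
    exact ⟨h1, h2, by rwa [Equiv.swap_apply_of_ne_of_ne h1 h2], h4⟩

/-- change formula for MM under swapping two positions -/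
lemma MM_change (u : Perm (Fin n)) (p q : Fin n) (hpq : p < q) (r j : ℕ) :
    MM (u * Equiv.swap p q) r j
        + (if (p : ℕ) < r ∧ r ≤ (q : ℕ) ∧ ((u q : Fin n) : ℕ) < j ∧ j ≤ ((u p : Fin n) : ℕ)
            then 1 else 0)
      = MM u r j
        + (if (p : ℕ) < r ∧ r ≤ (q : ℕ) ∧ ((u p : Fin n) : ℕ) < j ∧ j ≤ ((u q : Fin n) : ℕ)
            then 1 else 0) := by
  classical
  rw [MM_mul_swap u p q hpq.ne r j, MM_pull2 u p q hpq.ne r j]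
  have hpq' : (p : ℕ) < (q : ℕ) := hpq
  split_ifs <;> omega


/-- count of positions strictly between i and r with value ≥ j -/
def QQ (w : Perm (Fin n)) (i r j : ℕ) : ℕ :=
  (Finset.univ.filter fun a : Fin n =>
    i < (a : ℕ) ∧ (a : ℕ) < r ∧ j ≤ ((w a : Fin n) : ℕ)).card

lemma MM_split (w : Perm (Fin n)) (i : Fin n) (r j : ℕ) (hir : (i : ℕ) < r) :
    MM w r j = MM w (i : ℕ) j + (if j ≤ ((w i : Fin n) : ℕ) then 1 else 0)
      + QQ w (i : ℕ) r j := by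
  classical
  unfold MM QQ
  rw [pull (fun a : Fin n => (a : ℕ) < r ∧ j ≤ ((w a : Fin n) : ℕ)) i]
  have hite : (if (i : ℕ) < r ∧ j ≤ ((w i : Fin n) : ℕ) then 1 else 0)
      = (if j ≤ ((w i : Fin n) : ℕ) then 1 else 0) := by
    split_ifs <;> omega
  rw [hite]
  have hsplit := Finset.card_filter_add_card_filter_not
    (s := Finset.univ.filter fun a : Fin n =>
      a ≠ i ∧ (a : ℕ) < r ∧ j ≤ ((w a : Fin n) : ℕ))
    (p := fun a : Fin n => (a : ℕ) < (i : ℕ))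
  rw [Finset.filter_filter, Finset.filter_filter] at hsplit
  have e1 : (Finset.univ.filter fun a : Fin n =>
      (a ≠ i ∧ (a : ℕ) < r ∧ j ≤ ((w a : Fin n) : ℕ)) ∧ (a : ℕ) < (i : ℕ))
      = (Finset.univ.filter fun a : Fin n => (a : ℕ) < (i : ℕ) ∧ j ≤ ((w a : Fin n) : ℕ)) := by
    apply Finset.filter_congr
    intro a _
    constructor
    · rintro ⟨⟨-, -, h3⟩, h4⟩; exact ⟨h4, h3⟩
    · rintro ⟨h1, h2⟩
      exact ⟨⟨Fin.ne_of_val_ne (Nat.ne_of_lt h1), h1.trans hir, h2⟩, h1⟩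
  have e2 : (Finset.univ.filter fun a : Fin n =>
      (a ≠ i ∧ (a : ℕ) < r ∧ j ≤ ((w a : Fin n) : ℕ)) ∧ ¬(a : ℕ) < (i : ℕ))
      = (Finset.univ.filter fun a : Fin n =>
        (i : ℕ) < (a : ℕ) ∧ (a : ℕ) < r ∧ j ≤ ((w a : Fin n) : ℕ)) := by
    apply Finset.filter_congr
    intro a _
    constructor
    · rintro ⟨⟨h1, h2, h3⟩, h4⟩
      have : (a : ℕ) ≠ (i : ℕ) := fun hc => h1 (Fin.eq_of_val_eq hc)
      exact ⟨by omega, h2, h3⟩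
    · rintro ⟨h1, h2, h3⟩
      exact ⟨⟨Fin.ne_of_val_ne (Nat.ne_of_gt h1), h2, h3⟩, by omega⟩
  rw [← hsplit, e1, e2]
  ring


lemma MM_threshold (w : Perm (Fin n)) (j0 : ℕ) (hj : j0 < n) (r : ℕ) :
    MM w r j0 = MM w r (j0 + 1)
      + (if ((w⁻¹ ⟨j0, hj⟩ : Fin n) : ℕ) < r then 1 else 0) := by
  classical
  set e : Fin n := w⁻¹ ⟨j0, hj⟩ with he
  have hwe : w e = ⟨j0, hj⟩ := Equiv.Perm.apply_inv_self w _
  unfold MM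
  rw [pull (fun a : Fin n => (a : ℕ) < r ∧ j0 ≤ ((w a : Fin n) : ℕ)) e,
    pull (fun a : Fin n => (a : ℕ) < r ∧ j0 + 1 ≤ ((w a : Fin n) : ℕ)) e]
  have hcongr : (Finset.univ.filter fun a : Fin n =>
      a ≠ e ∧ (a : ℕ) < r ∧ j0 ≤ ((w a : Fin n) : ℕ))
      = (Finset.univ.filter fun a : Fin n =>
        a ≠ e ∧ (a : ℕ) < r ∧ j0 + 1 ≤ ((w a : Fin n) : ℕ)) := by
    apply Finset.filter_congr
    intro a _
    have : a ≠ e → ((w a : Fin n) : ℕ) ≠ j0 := by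
      intro ha hc
      apply ha
      have : w a = ⟨j0, hj⟩ := Fin.eq_of_val_eq hc
      rw [he, ← this, Equiv.Perm.inv_apply_self]
    constructor
    · rintro ⟨h1, h2, h3⟩; exact ⟨h1, h2, by have := this h1; omega⟩
    · rintro ⟨h1, h2, h3⟩; exact ⟨h1, h2, by omega⟩
  rw [hcongr, hwe]
  simp only
  split_ifs <;> omega

lemma QQ_mono (w : Perm (Fin n)) (i r : ℕ) {j j' : ℕ} (h : j ≤ j') :
    QQ w i r j' ≤ QQ w i r j := by
  apply Finset.card_le_card
  intro a ha
  rw [Finset.mem_filter] at ha ⊢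
  obtain ⟨hu, h1, h2, h3⟩ := ha
  exact ⟨hu, h1, h2, h.trans h3⟩

lemma QQ_congr {u v : Perm (Fin n)} (i r : ℕ) {j j' : ℕ}
    (h : ∀ a : Fin n, i < (a : ℕ) → (a : ℕ) < r →
      (j ≤ ((u a : Fin n) : ℕ) ↔ j' ≤ ((v a : Fin n) : ℕ))) :
    QQ u i r j = QQ v i r j' := by
  apply congrArg Finset.card
  apply Finset.filter_congr
  intro a _
  constructor
  · rintro ⟨h1, h2, h3⟩; exact ⟨h1, h2, (h a h1 h2).1 h3⟩
  · rintro ⟨h1, h2, h3⟩; exact ⟨h1, h2, (h a h1 h2).2 h3⟩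

lemma MM_agree {u v : Perm (Fin n)} (i j : ℕ)
    (h : ∀ a : Fin n, (a : ℕ) < i → u a = v a) :
    MM u i j = MM v i j := by
  apply congrArg Finset.card
  apply Finset.filter_congr
  intro a _
  constructor
  · rintro ⟨h1, h2⟩; exact ⟨h1, by rw [← h a h1]; exact h2⟩
  · rintro ⟨h1, h2⟩; exact ⟨h1, by rw [h a h1]; exact h2⟩


lemma mul_swap_left (u : Perm (Fin n)) (p q : Fin n) :
    (u * Equiv.swap p q) p = u q := by
  simp [Equiv.Perm.mul_apply]

lemma mul_swap_right (u : Perm (Fin n)) (p q : Fin n) :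
    (u * Equiv.swap p q) q = u p := by
  simp [Equiv.Perm.mul_apply]

lemma mul_swap_cancel (u : Perm (Fin n)) (p q : Fin n) :
    (u * Equiv.swap p q) * Equiv.swap p q = u := by
  rw [mul_assoc, Equiv.swap_mul_self, mul_one]

lemma len_gt_of_swap {u : Perm (Fin n)} {p q : Fin n} (hpq : p < q) (hv : u q < u p) :
    len (u * Equiv.swap p q) < len u := by
  have h := len_lt_of_swap (u := u * Equiv.swap p q) hpq
    (by rw [mul_swap_left, mul_swap_right]; exact hv)
  rwa [mul_swap_cancel] at h

lemma swap_mul_form (u : Perm (Fin n)) (p q : Fin n) :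
    u * Equiv.swap p q = Equiv.swap (u p) (u q) * u := by
  rw [Equiv.swap_mul_eq_mul_swap, Equiv.Perm.inv_apply_self, Equiv.Perm.inv_apply_self]

lemma QQ_empty (w : Perm (Fin n)) (m j : ℕ) : QQ w m (m + 1) j = 0 := by
  unfold QQ
  rw [Finset.card_eq_zero, Finset.filter_eq_empty_iff]
  rintro a -
  rintro ⟨h1, h2, -⟩
  omega

lemma MM_change_inc (u : Perm (Fin n)) (p q : Fin n) (hpq : p < q)
    (hval : ((u p : Fin n) : ℕ) < ((u q : Fin n) : ℕ)) (r j : ℕ) :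
    MM (u * Equiv.swap p q) r j = MM u r j
      + (if (p : ℕ) < r ∧ r ≤ (q : ℕ) ∧ ((u p : Fin n) : ℕ) < j ∧ j ≤ ((u q : Fin n) : ℕ)
          then 1 else 0) := by
  have h := MM_change u p q hpq r j
  rw [if_neg (by rintro ⟨-, -, h1, h2⟩; omega)] at h
  omega

def Dom (u v : Perm (Fin n)) : Prop := ∀ r j : ℕ, MM u r j ≤ MM v r j

/-- The key inequality: dominance is strict on the rectangle being raised. -/
lemma key {u v : Perm (Fin n)} (hdom : Dom u v) (i k : Fin n) (hik : i < k)
    (hfirst : ∀ a : Fin n, (a : ℕ) < (i : ℕ) → u a = v a)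
    (hab : ((u i : Fin n) : ℕ) < ((u k : Fin n) : ℕ))
    (hbV : ((u k : Fin n) : ℕ) ≤ ((v i : Fin n) : ℕ))
    (hmin : ∀ c : Fin n, (i : ℕ) < (c : ℕ) → (c : ℕ) < (k : ℕ) →
      ¬(((u i : Fin n) : ℕ) < ((u c : Fin n) : ℕ) ∧ ((u c : Fin n) : ℕ) ≤ ((v i : Fin n) : ℕ)))
    (r j : ℕ) (hir : (i : ℕ) < r) (hrk : r ≤ (k : ℕ))
    (haj : ((u i : Fin n) : ℕ) < j) (hjb : j ≤ ((u k : Fin n) : ℕ)) :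
    MM u r j + 1 ≤ MM v r j := by
  set a : ℕ := ((u i : Fin n) : ℕ)
  set b : ℕ := ((u k : Fin n) : ℕ)
  set V : ℕ := ((v i : Fin n) : ℕ)
  set J : ℕ := V + 1
  have hagree : MM u (i : ℕ) j = MM v (i : ℕ) j := MM_agree _ _ hfirst
  have hagreeJ : MM u (i : ℕ) J = MM v (i : ℕ) J := MM_agree _ _ hfirst
  have hu : MM u r j = MM u (i : ℕ) j + 0 + QQ u (i : ℕ) r j := by
    rw [MM_split u i r j hir, if_neg (by omega)]
  have hv : MM v r j = MM v (i : ℕ) j + 1 + QQ v (i : ℕ) r j := by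
    rw [MM_split v i r j hir, if_pos (by omega)]
  have hQu : QQ u (i : ℕ) r j = QQ u (i : ℕ) r J := by
    apply QQ_congr
    intro c h1 h2
    have hcc := hmin c h1 (lt_of_lt_of_le h2 hrk)
    constructor
    · intro h3; omega
    · intro h3; omega
  have huJ : MM u r J = MM u (i : ℕ) J + 0 + QQ u (i : ℕ) r J := by
    rw [MM_split u i r J hir, if_neg (by omega)]
  have hvJ : MM v r J = MM v (i : ℕ) J + 0 + QQ v (i : ℕ) r J := by
    rw [MM_split v i r J hir, if_neg (by omega)]
  have hQle : QQ u (i : ℕ) r J ≤ QQ v (i : ℕ) r J := by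
    have := hdom r J
    omega
  have hQmono : QQ v (i : ℕ) r J ≤ QQ v (i : ℕ) r j := QQ_mono v _ _ (by omega)
  omega

/-- Product-indexed potential function. -/
def Phi (u v : Perm (Fin n)) : ℕ :=
  ∑ x ∈ (Finset.range (n + 1)) ×ˢ (Finset.range (n + 1)),
    (MM v x.1 x.2 - MM u x.1 x.2)

lemma build_step {u v : Perm (Fin n)} (hdom : Dom u v) (hne : u ≠ v) :
    ∃ p q : Fin n, p < q ∧ u p < u q ∧ Dom (u * Equiv.swap p q) v ∧
      Phi (u * Equiv.swap p q) v < Phi u v := by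
  classical
  have hex : ∃ a : Fin n, u a ≠ v a := by
    by_contra hc
    push_neg at hc
    exact hne (Equiv.ext hc)
  obtain ⟨a0, ha0⟩ := hex
  have hdne : (Finset.univ.filter fun a : Fin n => u a ≠ v a).Nonempty :=
    ⟨a0, by simp [ha0]⟩
  set i := (Finset.univ.filter fun a : Fin n => u a ≠ v a).min' hdne with hi
  have hine : u i ≠ v i := by
    have h := Finset.min'_mem _ hdne
    rw [Finset.mem_filter] at h
    exact h.2
  have hfirst : ∀ a : Fin n, (a : ℕ) < (i : ℕ) → u a = v a := by
    intro a ha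
    by_contra hc
    have h1 : a ∈ Finset.univ.filter fun a : Fin n => u a ≠ v a := by
      rw [Finset.mem_filter]; exact ⟨Finset.mem_univ _, hc⟩
    have h2 := Finset.min'_le _ a h1
    rw [← hi] at h2
    exact absurd ha (by simp only [not_lt]; exact h2)
  have hival : (i : ℕ) < n := i.isLt
  have hlt : ((u i : Fin n) : ℕ) < ((v i : Fin n) : ℕ) := by
    rcases lt_trichotomy ((u i : Fin n) : ℕ) ((v i : Fin n) : ℕ) with h | h | h
    · exact h
    · exact absurd (Fin.eq_of_val_eq h) hine
    · exfalso
      have hd := hdom ((i : ℕ) + 1) ((u i : Fin n) : ℕ)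
      rw [MM_split u i ((i : ℕ) + 1) _ (by omega),
        MM_split v i ((i : ℕ) + 1) _ (by omega),
        QQ_empty, QQ_empty, MM_agree _ _ hfirst,
        if_pos (le_refl _), if_neg (by omega)] at hd
      omega
  have hCne : (Finset.univ.filter fun c : Fin n =>
      (i : ℕ) < (c : ℕ) ∧ ((u i : Fin n) : ℕ) < ((u c : Fin n) : ℕ) ∧
        ((u c : Fin n) : ℕ) ≤ ((v i : Fin n) : ℕ)).Nonempty := by
    refine ⟨u⁻¹ (v i), ?_⟩
    have huc : u (u⁻¹ (v i)) = v i := Equiv.Perm.apply_inv_self u _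
    rw [Finset.mem_filter]
    refine ⟨Finset.mem_univ _, ?_, by rw [huc]; exact hlt, by rw [huc]⟩
    rcases lt_trichotomy ((u⁻¹ (v i) : Fin n) : ℕ) ((i : ℕ)) with h | h | h
    · exfalso
      have h2 := hfirst _ h
      rw [huc] at h2
      have : (u⁻¹ (v i) : Fin n) = i := v.injective h2.symm
      omega
    · exfalso
      have : (u⁻¹ (v i) : Fin n) = i := Fin.eq_of_val_eq h
      rw [this] at huc
      exact hine huc
    · exact h
  set k := (Finset.univ.filter fun c : Fin n =>
      (i : ℕ) < (c : ℕ) ∧ ((u i : Fin n) : ℕ) < ((u c : Fin n) : ℕ) ∧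
        ((u c : Fin n) : ℕ) ≤ ((v i : Fin n) : ℕ)).min' hCne with hk
  have hkmem := Finset.min'_mem _ hCne
  rw [Finset.mem_filter] at hkmem
  rw [← hk] at hkmem
  obtain ⟨-, hik, hab, hbV⟩ := hkmem
  have hmin : ∀ c : Fin n, (i : ℕ) < (c : ℕ) → (c : ℕ) < (k : ℕ) →
      ¬(((u i : Fin n) : ℕ) < ((u c : Fin n) : ℕ) ∧
        ((u c : Fin n) : ℕ) ≤ ((v i : Fin n) : ℕ)) := by
    rintro c h1 h2 ⟨h3, h4⟩
    have hm : c ∈ Finset.univ.filter fun c : Fin n =>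
        (i : ℕ) < (c : ℕ) ∧ ((u i : Fin n) : ℕ) < ((u c : Fin n) : ℕ) ∧
          ((u c : Fin n) : ℕ) ≤ ((v i : Fin n) : ℕ) := by
      rw [Finset.mem_filter]; exact ⟨Finset.mem_univ _, h1, h3, h4⟩
    have h5 := Finset.min'_le _ c hm
    rw [← hk] at h5
    have : (k : ℕ) ≤ (c : ℕ) := h5
    omega
  have hikf : i < k := by rw [Fin.lt_def]; exact hik
  have hha : u i < u k := by rw [Fin.lt_def]; exact hab
  refine ⟨i, k, hikf, hha, ?_, ?_⟩
  · intro r j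
    rw [MM_change_inc u i k hikf hab r j]
    split_ifs with hcond
    · exact key hdom i k hikf hfirst hab hbV hmin r j hcond.1 hcond.2.1 hcond.2.2.1 hcond.2.2.2
    · exact hdom r j
  · unfold Phi
    apply Finset.sum_lt_sum
    · rintro ⟨r, j⟩ -
      simp only
      have h1 := MM_change_inc u i k hikf hab r j
      have h2 : MM u r j ≤ MM (u * Equiv.swap i k) r j := by rw [h1]; split_ifs <;> omega
      omega
    · refine ⟨((i : ℕ) + 1, ((u k : Fin n) : ℕ)), ?_, ?_⟩
      · rw [Finset.mem_product, Finset.mem_range, Finset.mem_range]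
        constructor
        · omega
        · have := (u k).isLt; omega
      · simp only
        have h1 := MM_change_inc u i k hikf hab ((i : ℕ) + 1) ((u k : Fin n) : ℕ)
        rw [if_pos (by refine ⟨by omega, by omega, by omega, le_refl _⟩)] at h1
        have h2 : MM (u * Equiv.swap i k) ((i : ℕ) + 1) ((u k : Fin n) : ℕ)
            ≤ MM v ((i : ℕ) + 1) ((u k : Fin n) : ℕ) := by
          rw [MM_change_inc u i k hikf hab]
          rw [if_pos (by refine ⟨by omega, by omega, by omega, le_refl _⟩)]
          exact key hdom i k hikf hfirst hab hbV hmin _ _ (by omega) (by omega) (by omega)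
            (le_refl _)
        omega


theorem dom_to_le_aux : ∀ (N : ℕ) (u v : Perm (Fin n)), Phi u v < N → Dom u v → BruhatLE u v := by
  intro N
  induction N with
  | zero => intro u v h; omega
  | succ N ih =>
    intro u v hN hdom
    by_cases h : u = v
    · rw [h]; exact Relation.ReflTransGen.refl
    · obtain ⟨p, q, hpq, hval, hdom', hphi⟩ := build_step hdom h
      have hstep : (∃ a b : Fin n, a ≠ b ∧ u * Equiv.swap p q = Equiv.swap a b * u) ∧
          len u < len (u * Equiv.swap p q) := by
        constructor
        · exact ⟨u p, u q, fun hc => (ne_of_lt hpq) (u.injective hc), swap_mul_form u p q⟩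
        · exact len_lt_of_swap hpq hval
      exact Relation.ReflTransGen.head hstep (ih _ _ (by omega) hdom')

theorem dom_to_le {u v : Perm (Fin n)} (hdom : Dom u v) : BruhatLE u v :=
  dom_to_le_aux (Phi u v + 1) u v (by omega) hdom

lemma step_dom {u v : Perm (Fin n)}
    (hstep : (∃ a b : Fin n, a ≠ b ∧ v = Equiv.swap a b * u) ∧ len u < len v) :
    Dom u v := by
  obtain ⟨⟨a, b, hab, hv⟩, hlen⟩ := hstep
  have hform : v = u * Equiv.swap (u⁻¹ a) (u⁻¹ b) := by
    rw [hv, Equiv.swap_mul_eq_mul_swap]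
  have hne : (u⁻¹ a) ≠ (u⁻¹ b) := fun hc => hab (by
    have := congrArg u hc
    rwa [Equiv.Perm.apply_inv_self, Equiv.Perm.apply_inv_self] at this)
  -- sort positions
  obtain ⟨p, q, hpq, hform'⟩ : ∃ p q : Fin n, p < q ∧ v = u * Equiv.swap p q := by
    rcases lt_or_gt_of_ne hne with h | h
    · exact ⟨_, _, h, hform⟩
    · exact ⟨_, _, h, by rw [hform, Equiv.swap_comm]⟩
  rcases lt_trichotomy (u p) (u q) with h | h | h
  · intro r j
    rw [hform', MM_change_inc u p q hpq h r j]
    split_ifs <;> omega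
  · exact absurd (u.injective h) (ne_of_lt hpq)
  · exfalso
    have := len_gt_of_swap hpq h
    rw [← hform'] at this
    omega

theorem le_to_dom {u v : Perm (Fin n)} (h : BruhatLE u v) : Dom u v := by
  unfold BruhatLE at h
  induction h with
  | refl => exact fun r j => le_refl _
  | tail hwv hstep ih =>
    intro r j
    exact le_trans (ih r j) (step_dom hstep r j)


/-- Lifting property, dominance form: if sy < y and sz > z and z ≤ y (dominance),
then z is dominated by sy. -/
lemma s_lift {i : ℕ} (h : i + 1 < n) (z y : Perm (Fin n))
    (hdzy : Dom z y)
    (hzord : ((z⁻¹ (⟨i, Nat.lt_of_succ_lt h⟩ : Fin n) : Fin n) : ℕ)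
      < ((z⁻¹ (⟨i + 1, h⟩ : Fin n) : Fin n) : ℕ))
    (hyord : ((y⁻¹ (⟨i + 1, h⟩ : Fin n) : Fin n) : ℕ)
      < ((y⁻¹ (⟨i, Nat.lt_of_succ_lt h⟩ : Fin n) : Fin n) : ℕ)) :
    Dom z (y * Equiv.swap (y⁻¹ (⟨i + 1, h⟩ : Fin n)) (y⁻¹ (⟨i, Nat.lt_of_succ_lt h⟩ : Fin n))) := by
  intro r j
  have hyfin : (y⁻¹ (⟨i + 1, h⟩ : Fin n)) < (y⁻¹ (⟨i, Nat.lt_of_succ_lt h⟩ : Fin n)) := by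
    rw [Fin.lt_def]; exact hyord
  have hch := MM_change y _ _ hyfin r j
  rw [Equiv.Perm.apply_inv_self, Equiv.Perm.apply_inv_self] at hch
  simp only [Fin.val_mk] at hch
  have himp : ¬(((y⁻¹ (⟨i + 1, h⟩ : Fin n) : Fin n) : ℕ) < r ∧
      r ≤ ((y⁻¹ (⟨i, Nat.lt_of_succ_lt h⟩ : Fin n) : Fin n) : ℕ) ∧ i + 1 < j ∧ j ≤ i) := by
    rintro ⟨-, -, h1, h2⟩; omega
  rw [if_neg himp] at hch
  by_cases hC : ((y⁻¹ (⟨i + 1, h⟩ : Fin n) : Fin n) : ℕ) < r ∧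
      r ≤ ((y⁻¹ (⟨i, Nat.lt_of_succ_lt h⟩ : Fin n) : Fin n) : ℕ) ∧ i < j ∧ j ≤ i + 1
  · rw [if_pos hC] at hch
    have hj : j = i + 1 := by omega
    subst hj
    have t1 := MM_threshold z i (Nat.lt_of_succ_lt h) r
    have t2 := MM_threshold y i (Nat.lt_of_succ_lt h) r
    have t3 := MM_threshold z (i + 1) h r
    have t4 := MM_threshold y (i + 1) h r
    have d1 := hdzy r i
    have d2 := hdzy r (i + 1 + 1)
    have d3 := hdzy r (i + 1)
    split_ifs at t1 t2 t3 t4 <;> omega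
  · rw [if_neg hC] at hch
    have := hdzy r j
    omega

end BAux

/-- w is the cycle (i₁−j+1, …, i₀+1, i₀): sends i to i−1 for i₀ < i ≤ i₁−j+1,
sends i₀ to i₁−j+1, and fixes all other points. -/
def IsCycleW (n i0 i1 j : ℕ) (w : Perm (Fin n)) : Prop :=
  ∀ i : Fin n,
    ((i0 < (i : ℕ) ∧ (i : ℕ) ≤ i1 - j + 1) → (w i : ℕ) = (i : ℕ) - 1) ∧
    ((i : ℕ) = i0 → (w i : ℕ) = i1 - j + 1) ∧
    (((i : ℕ) < i0 ∨ i1 - j + 1 < (i : ℕ)) → w i = i)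

theorem stmt8 (n : ℕ) (i : ℕ) (h : i + 1 < n) (x y : Perm (Fin n))
    (hxy : BruhatLT x y)
    (hy : len (simpleT n i h * y) < len y)
    (hx : len (simpleT n i h * x) < len x)
    (hinc : ¬ BruhatLE x (simpleT n i h * y) ∧ ¬ BruhatLE (simpleT n i h * y) x) :
    ∀ z : Perm (Fin n), BruhatLT x z → BruhatLT z y →
      len (simpleT n i h * z) < len z := by
  intro z hxz hzy
  by_contra hcon
  have hII : (⟨i, Nat.lt_of_succ_lt h⟩ : Fin n) < ⟨i + 1, h⟩ := by
    rw [Fin.lt_def]; simp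
  have hsw : ∀ w : Perm (Fin n), simpleT n i h * w
      = w * Equiv.swap (w⁻¹ ⟨i, Nat.lt_of_succ_lt h⟩) (w⁻¹ ⟨i + 1, h⟩) := by
    intro w; unfold simpleT; rw [Equiv.swap_mul_eq_mul_swap]
  have hne : ∀ w : Perm (Fin n), w⁻¹ (⟨i, Nat.lt_of_succ_lt h⟩ : Fin n) ≠ w⁻¹ ⟨i + 1, h⟩ := by
    intro w hc
    have h2 := congrArg w hc
    rw [Equiv.Perm.apply_inv_self, Equiv.Perm.apply_inv_self] at h2
    have h3 := congrArg Fin.val h2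
    simp only [Fin.val_mk] at h3
    omega
  have hzord : ((z⁻¹ (⟨i, Nat.lt_of_succ_lt h⟩ : Fin n) : Fin n) : ℕ)
      < ((z⁻¹ (⟨i + 1, h⟩ : Fin n) : Fin n) : ℕ) := by
    rcases lt_trichotomy (z⁻¹ (⟨i, Nat.lt_of_succ_lt h⟩ : Fin n)) (z⁻¹ (⟨i + 1, h⟩ : Fin n))
      with hlt | heq | hgt
    · exact hlt
    · exact absurd heq (hne z)
    · exfalso
      apply hcon
      rw [hsw z, Equiv.swap_comm]
      apply BAux.len_gt_of_swap hgt
      rw [Equiv.Perm.apply_inv_self, Equiv.Perm.apply_inv_self]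
      exact hII
  have hyord : ((y⁻¹ (⟨i + 1, h⟩ : Fin n) : Fin n) : ℕ)
      < ((y⁻¹ (⟨i, Nat.lt_of_succ_lt h⟩ : Fin n) : Fin n) : ℕ) := by
    rcases lt_trichotomy (y⁻¹ (⟨i, Nat.lt_of_succ_lt h⟩ : Fin n)) (y⁻¹ (⟨i + 1, h⟩ : Fin n))
      with hlt | heq | hgt
    · exfalso
      have h2 : len y < len (simpleT n i h * y) := by
        rw [hsw y]
        apply BAux.len_lt_of_swap hlt
        rw [Equiv.Perm.apply_inv_self, Equiv.Perm.apply_inv_self]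
        exact hII
      exact lt_asymm hy h2
    · exact absurd heq (hne y)
    · exact hgt
  have hdzy := BAux.le_to_dom hzy.1
  have hdom := BAux.s_lift h z y hdzy hzord hyord
  have hform : simpleT n i h * y
      = y * Equiv.swap (y⁻¹ (⟨i + 1, h⟩ : Fin n)) (y⁻¹ (⟨i, Nat.lt_of_succ_lt h⟩ : Fin n)) := by
    rw [hsw y, Equiv.swap_comm]
  have hle : BruhatLE z (simpleT n i h * y) := by
    rw [hform]
    exact BAux.dom_to_le hdom
  exact hinc.1 (Relation.ReflTransGen.trans hxz.1 hle)
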